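/- Let I be a binary CSP instance with at least k variables (k ≥ 2) satisfying the ∀∃ broken k-dimensional polyhedron property on variable x_m. Then any solution to the sub-instance I_{-m} obtained by removing variable x_m (and its constraints) extends to a solution of I by assigning some value to x_m. In particular, eliminating x_m preserves satisfiability. -/

import Mathlib

universe u v

/-- A binary CSP instance: finite domains and binary relations with
`rel j i` the transpose of `rel i j`. -/
structure BinCSP (V : Type u) (α : Type v) where
  dom : V → Set α
  rel : V → V → α → α → Prop
  finDom : ∀ i, (dom i).Finite
  symm : ∀ i j a b, rel i j a b ↔ rel j i b a

namespace BinCSP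

variable {V : Type u} {α : Type v}

/-- A solution assigns to each variable a domain value so that all binary
relations are satisfied. -/
def IsSol (I : BinCSP V α) (s : V → α) : Prop :=
  (∀ i, s i ∈ I.dom i) ∧ ∀ i j, i ≠ j → I.rel i j (s i) (s j)

/-- The instance obtained by eliminating variable `i`: each other domain is
restricted to values supported at `i`, then `i` and its constraints are removed. -/
def elim (I : BinCSP V α) (i : V) : BinCSP {j : V // j ≠ i} α where
  dom j := {v | v ∈ I.dom j.1 ∧ ∃ w ∈ I.dom i, I.rel j.1 i v w}
  rel j k a b := I.rel j.1 k.1 a b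
  finDom j := (I.finDom j.1).subset fun _ hv => hv.1
  symm j k a b := I.symm j.1 k.1 a b

/-- The sub-instance on `X \ {i}` (same domains, constraints restricted). -/
def sub (I : BinCSP V α) (i : V) : BinCSP {j : V // j ≠ i} α where
  dom j := I.dom j.1
  rel j k a b := I.rel j.1 k.1 a b
  finDom j := I.finDom j.1
  symm j k a b := I.symm j.1 k.1 a b

/-- A broken `n`-dimensional polyhedron on variable `m`, with base the
consistent assignment `v` to the distinct variables `idx` (all `≠ m`) and
distinct apexes `u` in the domain of `m`. -/
def BrokenPoly {n : ℕ} (I : BinCSP V α) (m : V)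
    (idx : Fin n → V) (v u : Fin n → α) : Prop :=
  Function.Injective idx ∧ (∀ a, idx a ≠ m) ∧ (∀ a, v a ∈ I.dom (idx a)) ∧
    (∀ a b, a ≠ b → I.rel (idx a) (idx b) (v a) (v b)) ∧
    Function.Injective u ∧ (∀ a, u a ∈ I.dom m) ∧
    (∀ a, ¬ I.rel (idx a) m (v a) (u a)) ∧
    (∀ a b, a ≠ b → I.rel (idx a) m (v a) (u b))

/-- The ∀∃ broken `k`-dimensional polyhedron property on variable `m`. -/
def AEPoly (I : BinCSP V α) (m : V) (k : ℕ) : Prop :=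
  ∀ p : ℕ, p + 1 = k →
    ∀ idx : Fin p → V, Function.Injective idx → (∀ a, idx a ≠ m) →
    ∀ v : Fin p → α, (∀ a, v a ∈ I.dom (idx a)) →
      (∀ a b, a ≠ b → I.rel (idx a) (idx b) (v a) (v b)) →
    ∃ vm ∈ I.dom m, (∀ a, I.rel (idx a) m (v a) vm) ∧
      ∀ ik, ik ≠ m → (∀ a, ik ≠ idx a) → ∀ vk ∈ I.dom ik,
        ∀ u : Fin (p + 1) → α,
          ¬ (BrokenPoly I m (Fin.snoc idx ik) (Fin.snoc v vk) u ∧ ∃ a, u a = vm)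

/-- the ∀∃ broken `k`-dimensional polyhedron property is a
(solution-conserving) variable-elimination condition in instances with at
least `k` variables. -/
theorem AEPoly_extend [Fintype V] (I : BinCSP V α) (m : V) (k : ℕ)
    (hk : 2 ≤ k) (hcard : k ≤ Fintype.card V) (h : AEPoly I m k) :
    (∀ s' : {j : V // j ≠ m} → α, (I.sub m).IsSol s' →
      ∃ s : V → α, I.IsSol s ∧ ∀ j (hj : j ≠ m), s j = s' ⟨j, hj⟩) ∧
    ((∃ s : V → α, I.IsSol s) ↔ ∃ t : {j : V // j ≠ m} → α, (I.sub m).IsSol t) := by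
  classical
  have main : ∀ s' : {j : V // j ≠ m} → α, (I.sub m).IsSol s' →
      ∃ s : V → α, I.IsSol s ∧ ∀ j (hj : j ≠ m), s j = s' ⟨j, hj⟩ := by
    intro s' hs'
    obtain ⟨hs'dom, hs'rel⟩ := hs'
    set p := k - 1 with hpdef
    have hp : p + 1 = k := by omega
    -- the set of values of `dom m` compatible with the tuple `f`
    set K : (Fin p → {j : V // j ≠ m}) → Set α :=
      fun f => {w | w ∈ I.dom m ∧ ∀ a, I.rel (f a).1 m (s' (f a)) w} with hKdef
    have hKfin : ∀ f, (K f).Finite := fun f => (I.finDom m).subset fun w hw => hw.1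
    -- existence of an injective tuple
    have hcard' : p ≤ Fintype.card {j : V // j ≠ m} := by
      have h1 : Fintype.card {j : V // j ≠ m} = Fintype.card V - 1 := by
        have := Fintype.card_subtype_compl (fun j : V => j = m)
        simpa [Fintype.card_subtype_eq] using this
      omega
    obtain ⟨e⟩ : Nonempty (Fin p ↪ {j : V // j ≠ m}) := by
      refine Function.Embedding.nonempty_of_card_le ?_
      simpa using hcard'
    set S : Set ℕ :=
      {n | ∃ f : Fin p → {j : V // j ≠ m}, Function.Injective f ∧ (K f).ncard = n} with hSdef
    have hSne : S.Nonempty := ⟨(K e).ncard, e, e.injective, rfl⟩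
    obtain ⟨f0, hf0inj, hf0card⟩ := Nat.sInf_mem hSne
    -- apply the ∀∃ property to the minimizing tuple
    set idx : Fin p → V := fun a => (f0 a).1 with hidxdef
    have hidxinj : Function.Injective idx := fun a b hab =>
      hf0inj (Subtype.ext hab)
    have hidxne : ∀ a, idx a ≠ m := fun a => (f0 a).2
    obtain ⟨vm, hvmdom, hvmrel, hNoBP⟩ :=
      h p hp idx hidxinj hidxne (fun a => s' (f0 a)) (fun a => hs'dom (f0 a))
        (fun a b hab => hs'rel (f0 a) (f0 b) fun e' => hab (hf0inj e'))
    -- main claim: vm is compatible with every variable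
    have hall : ∀ j : {j : V // j ≠ m}, I.rel j.1 m (s' j) vm := by
      by_contra hcon
      push_neg at hcon
      obtain ⟨jk, hjk⟩ := hcon
      have hjknotin : ∀ a, jk.1 ≠ (f0 a).1 := by
        intro a hEq
        have : jk = f0 a := Subtype.ext hEq
        exact hjk (by rw [this]; exact hvmrel a)
      -- key exchange property from the no-broken-polyhedron condition
      have key : ∃ a : Fin p, ∀ w, w ∈ I.dom m →
          (∀ b, b ≠ a → I.rel (f0 b).1 m (s' (f0 b)) w) →
          I.rel jk.1 m (s' jk) w → I.rel (f0 a).1 m (s' (f0 a)) w := by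
        by_contra hA
        push_neg at hA
        choose w hwdom hwrel hwjk hwbad using hA
        refine hNoBP jk.1 jk.2 hjknotin (s' jk) (hs'dom jk) (Fin.snoc w vm)
          ⟨⟨?_, ?_, ?_, ?_, ?_, ?_, ?_, ?_⟩, ⟨Fin.last p, Fin.snoc_last _ _⟩⟩
        · -- injectivity of the base variables
          intro a b hab
          rcases Fin.eq_castSucc_or_eq_last a with ⟨a', rfl⟩ | rfl <;>
            rcases Fin.eq_castSucc_or_eq_last b with ⟨b', rfl⟩ | rfl
          · simp only [Fin.snoc_castSucc] at hab
            exact congrArg Fin.castSucc (hidxinj hab)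
          · simp only [Fin.snoc_castSucc, Fin.snoc_last] at hab
            exact absurd hab.symm (hjknotin a')
          · simp only [Fin.snoc_castSucc, Fin.snoc_last] at hab
            exact absurd hab (hjknotin b')
          · rfl
        · intro a
          rcases Fin.eq_castSucc_or_eq_last a with ⟨a', rfl⟩ | rfl
          · simpa using hidxne a'
          · simpa using jk.2
        · intro a
          rcases Fin.eq_castSucc_or_eq_last a with ⟨a', rfl⟩ | rfl
          · simpa [sub] using hs'dom (f0 a')
          · simpa [sub] using hs'dom jk
        · intro a b hab
          rcases Fin.eq_castSucc_or_eq_last a with ⟨a', rfl⟩ | rfl <;>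
            rcases Fin.eq_castSucc_or_eq_last b with ⟨b', rfl⟩ | rfl
          · have : a' ≠ b' := fun e' => hab (congrArg Fin.castSucc e')
            simpa [sub] using hs'rel (f0 a') (f0 b') fun e' => this (hf0inj e')
          · simpa [sub] using hs'rel (f0 a') jk fun e' => hjknotin a' (congrArg Subtype.val e').symm
          · simpa [sub] using hs'rel jk (f0 b') fun e' => hjknotin b' (congrArg Subtype.val e')
          · exact absurd rfl hab
        · -- injectivity of the apexes
          intro a b hab
          rcases Fin.eq_castSucc_or_eq_last a with ⟨a', rfl⟩ | rfl <;>
            rcases Fin.eq_castSucc_or_eq_last b with ⟨b', rfl⟩ | rfl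
          · simp only [Fin.snoc_castSucc] at hab
            by_contra hne
            have ha'b' : a' ≠ b' := fun e' => hne (congrArg Fin.castSucc e')
            exact hwbad a' (hab ▸ hwrel b' a' ha'b')
          · simp only [Fin.snoc_castSucc, Fin.snoc_last] at hab
            exact absurd (hab ▸ hvmrel a') (hwbad a')
          · simp only [Fin.snoc_castSucc, Fin.snoc_last] at hab
            exact absurd (hab.symm ▸ hvmrel b') (hwbad b')
          · rfl
        · intro a
          rcases Fin.eq_castSucc_or_eq_last a with ⟨a', rfl⟩ | rfl
          · simpa using hwdom a'
          · simpa using hvmdom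
        · intro a
          rcases Fin.eq_castSucc_or_eq_last a with ⟨a', rfl⟩ | rfl
          · simpa using hwbad a'
          · simpa using hjk
        · intro a b hab
          rcases Fin.eq_castSucc_or_eq_last a with ⟨a', rfl⟩ | rfl <;>
            rcases Fin.eq_castSucc_or_eq_last b with ⟨b', rfl⟩ | rfl
          · have : a' ≠ b' := fun e' => hab (congrArg Fin.castSucc e')
            simpa using hwrel b' a' this
          · simpa using hvmrel a'
          · simpa using hwjk b'
          · exact absurd rfl hab
      obtain ⟨a0, ha0⟩ := key
      -- the exchanged tuple has a strictly smaller compatibility set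
      set f1 : Fin p → {j : V // j ≠ m} := Function.update f0 a0 jk with hf1def
      have hf1inj : Function.Injective f1 := by
        intro a b hab
        by_cases ha : a = a0 <;> by_cases hb : b = a0
        · rw [ha, hb]
        · exfalso
          rw [hf1def] at hab
          rw [ha, Function.update_self, Function.update_of_ne hb] at hab
          exact hjknotin b (congrArg Subtype.val hab)
        · exfalso
          rw [hf1def] at hab
          rw [hb, Function.update_self, Function.update_of_ne ha] at hab
          exact hjknotin a (congrArg Subtype.val hab).symm
        · rw [hf1def] at hab
          rw [Function.update_of_ne ha, Function.update_of_ne hb] at hab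
          exact hf0inj hab
      have hsub : K f1 ⊆ K f0 := by
        rintro w ⟨hwd, hwr⟩
        refine ⟨hwd, fun c => ?_⟩
        by_cases hc : c = a0
        · subst hc
          refine ha0 w hwd (fun b hb => ?_) ?_
          · have := hwr b
            rwa [hf1def, Function.update_of_ne hb] at this
          · have := hwr c
            rwa [hf1def, Function.update_self] at this
        · have := hwr c
          rwa [hf1def, Function.update_of_ne hc] at this
      have hvmK0 : vm ∈ K f0 := ⟨hvmdom, hvmrel⟩
      have hvmK1 : vm ∉ K f1 := by
        rintro ⟨-, hr⟩
        have := hr a0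
        rw [hf1def, Function.update_self] at this
        exact hjk this
      have hss : K f1 ⊂ K f0 :=
        (Set.ssubset_iff_of_subset hsub).mpr ⟨vm, hvmK0, hvmK1⟩
      have hlt : (K f1).ncard < (K f0).ncard := Set.ncard_lt_ncard hss (hKfin f0)
      have hle : sInf S ≤ (K f1).ncard := Nat.sInf_le ⟨f1, hf1inj, rfl⟩
      omega
    -- build the extended solution
    refine ⟨fun j => if hj : j = m then vm else s' ⟨j, hj⟩, ⟨?_, ?_⟩, ?_⟩
    · intro i
      by_cases hi : i = m
      · subst hi; simpa using hvmdom
      · simpa [hi, sub] using hs'dom ⟨i, hi⟩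
    · intro i j hij
      by_cases hi : i = m <;> by_cases hj : j = m
      · exact absurd (hi.trans hj.symm) hij
      · simp only [dif_pos hi, dif_neg hj]
        rw [hi]
        exact (I.symm m j vm (s' ⟨j, hj⟩)).mpr (hall ⟨j, hj⟩)
      · simp only [dif_pos hj, dif_neg hi]
        rw [hj]
        exact hall ⟨i, hi⟩
      · simp only [dif_neg hi, dif_neg hj]
        exact hs'rel ⟨i, hi⟩ ⟨j, hj⟩ fun e' => hij (congrArg Subtype.val e')
    · intro j hj
      simp [hj]
  refine ⟨main, ?_, ?_⟩
  · rintro ⟨s, hs⟩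
    exact ⟨fun j => s j.1, fun j => hs.1 j.1,
      fun i j hij => hs.2 i.1 j.1 fun e' => hij (Subtype.ext e')⟩
  · rintro ⟨t, ht⟩
    obtain ⟨s, hsol, -⟩ := main t ht
    exact ⟨s, hsol⟩

end BinCSP
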